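/- Let a, a′ : ℕ → ℝ be nonincreasing sequences of nonnegative reals and b, b′ : ℕ → ℝ nondecreasing sequences of nonpositive reals such that the partial sums ∑_{k<N}(a_k + b_k) converge to S ∈ ℝ and ∑_{k<N}(a′_k + b′_k) converge to S′ ∈ ℝ as N → ∞. Let c : ℕ → ℝ be a nonincreasing sequence and d : ℕ → ℝ a nondecreasing sequence that enumerate, with multiplicity, the disjoint union of the terms of a and a′, respectively of b and b′; that is, there are bijections σ, τ : ℕ → ℕ ⊕ ℕ with c_k = (Sum.elim a a′)(σ k) and d_k = (Sum.elim b b′)(τ k) for all k. Then ∑_{k<N}(c_k + d_k) → S + S′ as N → ∞. -/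

import Mathlib

open Filter Topology

private lemma sum_le_sum_range_card (f : ℕ → ℝ) (hf : Antitone f) (F : Finset ℕ) :
    ∑ i ∈ F, f i ≤ ∑ i ∈ Finset.range F.card, f i := by
  induction F using Finset.induction_on_max with
  | empty => simp
  | insert M F hM ih =>
    have hMF : M ∉ F := fun h => lt_irrefl M (hM M h)
    rw [Finset.sum_insert hMF, Finset.card_insert_of_notMem hMF, Finset.sum_range_succ]
    have hcard : F.card ≤ M := by
      have hsub : F ⊆ Finset.range M := fun x hx => Finset.mem_range.2 (hM x hx)
      simpa using Finset.card_le_card hsub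
    have := hf hcard
    linarith

private lemma merge_upper (a a' c : ℕ → ℝ) (ha : Antitone a) (ha' : Antitone a')
    (σ : ℕ ≃ (ℕ ⊕ ℕ)) (hcσ : ∀ k, c k = Sum.elim a a' (σ k)) (N : ℕ) :
    ∑ k ∈ Finset.range N, c k ≤
      (∑ k ∈ Finset.range (((Finset.range N).map σ.toEmbedding).toLeft.card), a k)
      + ∑ k ∈ Finset.range (((Finset.range N).map σ.toEmbedding).toRight.card), a' k := by
  set F := (Finset.range N).map σ.toEmbedding with hF
  have h1 : ∑ k ∈ Finset.range N, c k = ∑ s ∈ F, Sum.elim a a' s := by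
    rw [hF, Finset.sum_map]
    exact Finset.sum_congr rfl fun k _ => hcσ k
  have h2 : ∑ s ∈ F, Sum.elim a a' s
      = (∑ i ∈ F.toLeft, a i) + ∑ j ∈ F.toRight, a' j := by
    conv_lhs => rw [← Finset.toLeft_disjSum_toRight (u := F)]
    rw [Finset.sum_sumElim]
  rw [h1, h2]
  exact add_le_add (sum_le_sum_range_card a ha _) (sum_le_sum_range_card a' ha' _)

private lemma merge_lower (a a' c : ℕ → ℝ) (hc : Antitone c)
    (σ : ℕ ≃ (ℕ ⊕ ℕ)) (hcσ : ∀ k, c k = Sum.elim a a' (σ k)) (m n : ℕ) :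
    (∑ k ∈ Finset.range m, a k) + ∑ k ∈ Finset.range n, a' k ≤
      ∑ k ∈ Finset.range (m + n), c k := by
  set G := ((Finset.range m).disjSum (Finset.range n)).map σ.symm.toEmbedding with hG
  have hcard : G.card = m + n := by simp [hG]
  have h1 : ∑ k ∈ G, c k
      = (∑ k ∈ Finset.range m, a k) + ∑ k ∈ Finset.range n, a' k := by
    rw [hG, Finset.sum_map]
    have : ∀ s ∈ (Finset.range m).disjSum (Finset.range n),
        c (σ.symm.toEmbedding s) = Sum.elim a a' s := by
      intro s _
      rw [Equiv.coe_toEmbedding, hcσ, Equiv.apply_symm_apply]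
    rw [Finset.sum_congr rfl this, Finset.sum_sumElim]
  calc (∑ k ∈ Finset.range m, a k) + ∑ k ∈ Finset.range n, a' k
      = ∑ k ∈ G, c k := h1.symm
    _ ≤ ∑ k ∈ Finset.range G.card, c k := sum_le_sum_range_card c hc G
    _ = ∑ k ∈ Finset.range (m + n), c k := by rw [hcard]

private lemma tendsto_toLeft_card (σ : ℕ ≃ (ℕ ⊕ ℕ)) :
    Tendsto (fun N => ((Finset.range N).map σ.toEmbedding).toLeft.card) atTop atTop := by
  rw [tendsto_atTop_atTop]
  intro M
  refine ⟨(Finset.range M).sup (fun i => σ.symm (Sum.inl i)) + 1, fun N hN => ?_⟩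
  have hsub : Finset.range M ⊆ ((Finset.range N).map σ.toEmbedding).toLeft := by
    intro i hi
    simp only [Finset.mem_toLeft, Finset.mem_map, Finset.mem_range, Equiv.coe_toEmbedding]
    refine ⟨σ.symm (Sum.inl i), ?_, by simp⟩
    have := Finset.le_sup (f := fun i => σ.symm (Sum.inl i)) hi
    exact lt_of_lt_of_le (Nat.lt_succ_of_le this) hN
  simpa using Finset.card_le_card hsub

private lemma tendsto_toRight_card (σ : ℕ ≃ (ℕ ⊕ ℕ)) :
    Tendsto (fun N => ((Finset.range N).map σ.toEmbedding).toRight.card) atTop atTop := by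
  rw [tendsto_atTop_atTop]
  intro M
  refine ⟨(Finset.range M).sup (fun i => σ.symm (Sum.inr i)) + 1, fun N hN => ?_⟩
  have hsub : Finset.range M ⊆ ((Finset.range N).map σ.toEmbedding).toRight := by
    intro i hi
    simp only [Finset.mem_toRight, Finset.mem_map, Finset.mem_range, Equiv.coe_toEmbedding]
    refine ⟨σ.symm (Sum.inr i), ?_, by simp⟩
    have := Finset.le_sup (f := fun i => σ.symm (Sum.inr i)) hi
    exact lt_of_lt_of_le (Nat.lt_succ_of_le this) hN
  simpa using Finset.card_le_card hsub

/-- Lemma 4.4: additivity of the regularized trace, at the level of eigenvalue sequences.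
If `c` (nonincreasing) and `d` (nondecreasing) are monotone merges of `a, a'` and `b, b'`
respectively, and `∑ (a_k + b_k) → S`, `∑ (a'_k + b'_k) → S'`, then `∑ (c_k + d_k) → S + S'`. -/
theorem stmt_4 (a a' b b' c d : ℕ → ℝ) (S S' : ℝ)
    (ha : Antitone a) (ha0 : ∀ k, 0 ≤ a k)
    (ha' : Antitone a') (ha'0 : ∀ k, 0 ≤ a' k)
    (hb : Monotone b) (hb0 : ∀ k, b k ≤ 0)
    (hb' : Monotone b') (hb'0 : ∀ k, b' k ≤ 0)
    (hS : Tendsto (fun N => ∑ k ∈ Finset.range N, (a k + b k)) atTop (𝓝 S))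
    (hS' : Tendsto (fun N => ∑ k ∈ Finset.range N, (a' k + b' k)) atTop (𝓝 S'))
    (hc : Antitone c) (hd : Monotone d)
    (σ : ℕ ≃ (ℕ ⊕ ℕ)) (τ : ℕ ≃ (ℕ ⊕ ℕ))
    (hcσ : ∀ k, c k = Sum.elim a a' (σ k))
    (hdτ : ∀ k, d k = Sum.elim b b' (τ k)) :
    Tendsto (fun N => ∑ k ∈ Finset.range N, (c k + d k)) atTop (𝓝 (S + S')) := by
  set m := fun N => ((Finset.range N).map σ.toEmbedding).toLeft.card with hm
  set n := fun N => ((Finset.range N).map σ.toEmbedding).toRight.card with hn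
  set p := fun N => ((Finset.range N).map τ.toEmbedding).toLeft.card with hp
  set q := fun N => ((Finset.range N).map τ.toEmbedding).toRight.card with hq
  have hmn : ∀ N, m N + n N = N := by
    intro N
    rw [hm, hn]
    simp [Finset.card_toLeft_add_card_toRight]
  have hpq : ∀ N, p N + q N = N := by
    intro N
    rw [hp, hq]
    simp [Finset.card_toLeft_add_card_toRight]
  -- negated versions for d
  have hdneg : Antitone (fun k => -d k) := fun i j h => neg_le_neg (hd h)
  have hbneg : Antitone (fun k => -b k) := fun i j h => neg_le_neg (hb h)
  have hb'neg : Antitone (fun k => -b' k) := fun i j h => neg_le_neg (hb' h)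
  have hdτ' : ∀ k, (fun k => -d k) k = Sum.elim (fun k => -b k) (fun k => -b' k) (τ k) := by
    intro k
    rcases h : τ k with i | i <;> simp [hdτ k, h]
  -- upper bound
  have hub : ∀ N, ∑ k ∈ Finset.range N, (c k + d k) ≤
      (∑ k ∈ Finset.range (m N), (a k + b k)) + ∑ k ∈ Finset.range (n N), (a' k + b' k) := by
    intro N
    have h1 := merge_upper a a' c ha ha' σ hcσ N
    have h2 := merge_lower (fun k => -b k) (fun k => -b' k) (fun k => -d k) hdneg τ hdτ' (m N) (n N)
    rw [hmn N] at h2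
    simp only [Finset.sum_add_distrib, Finset.sum_neg_distrib] at *
    linarith
  -- lower bound
  have hlb : ∀ N, (∑ k ∈ Finset.range (p N), (a k + b k)) + ∑ k ∈ Finset.range (q N), (a' k + b' k)
      ≤ ∑ k ∈ Finset.range N, (c k + d k) := by
    intro N
    have h1 := merge_lower a a' c hc σ hcσ (p N) (q N)
    rw [hpq N] at h1
    have h2 := merge_upper (fun k => -b k) (fun k => -b' k) (fun k => -d k) hbneg hb'neg τ hdτ' N
    simp only [Finset.sum_add_distrib, Finset.sum_neg_distrib] at *
    linarith
  have hU : Tendsto (fun N => (∑ k ∈ Finset.range (m N), (a k + b k))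
      + ∑ k ∈ Finset.range (n N), (a' k + b' k)) atTop (𝓝 (S + S')) :=
    (hS.comp (tendsto_toLeft_card σ)).add (hS'.comp (tendsto_toRight_card σ))
  have hL : Tendsto (fun N => (∑ k ∈ Finset.range (p N), (a k + b k))
      + ∑ k ∈ Finset.range (q N), (a' k + b' k)) atTop (𝓝 (S + S')) :=
    (hS.comp (tendsto_toLeft_card τ)).add (hS'.comp (tendsto_toRight_card τ))
  exact tendsto_of_tendsto_of_tendsto_of_le_of_le hL hU hlb hub
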